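/- Let A be a nonempty finite alphabet, S a primitive substitution on A with |S(a)| ≥ 2 for some letter a, and ω₀ : ℤ → A a configuration. Then exactly one of the following holds: either d_H(Ωₙ(ω₀), Ω(S)) → 0 as n → ∞, or there exists ε > 0 such that d_H(Ωₙ(ω₀), Ω(S)) ≥ ε for all n ∈ ℕ. In other words, the iterated hull sequence is a bad approximating sequence if and only if d_H(Ωₙ(ω₀), Ω(S)) is bounded away from 0. -/

import Mathlib

namespace QC

variable {A : Type*}

/-- The shift action of `ℤ` on configurations: `(m · ω)(n) = ω (n - m)`. -/
def shift (m : ℤ) (ω : ℤ → A) : ℤ → A := fun n => ω (n - m)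

/-- The word `u` occurs in the configuration `ω` (at some position `k`). -/
def Occurs (u : List A) (ω : ℤ → A) : Prop :=
  ∃ k : ℤ, u = (List.range u.length).map fun i => ω (k + i)

/-- The dictionary of a configuration: all (nonempty) words occurring in it. -/
def Dict (ω : ℤ → A) : Set (List A) := {u | u ≠ [] ∧ Occurs u ω}

/-- The set of length-`ℓ` words occurring in a configuration. -/
def DictLen (ω : ℤ → A) (ℓ : ℕ) : Set (List A) := {u | u.length = ℓ ∧ Occurs u ω}

/-- The extension of a substitution rule `S : A → List A` to words, by concatenation. -/
def wordSub (S : A → List A) (u : List A) : List A := (u.map S).flatten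

/-- A word is legal for `S` if it is an infix of `Sⁿ(a)` for some letter `a` and `n : ℕ`. -/
def Legal (S : A → List A) (u : List A) : Prop :=
  ∃ (a : A) (n : ℕ), u <:+: (wordSub S)^[n] [a]

/-- `S` is primitive: some power `p ≥ 1` of `S` maps every letter to a word containing
all letters. -/
def Primitive (S : A → List A) : Prop :=
  ∃ p : ℕ, 1 ≤ p ∧ ∀ a b : A, b ∈ (wordSub S)^[p] [a]

/-- The starting position (in `S ω`) of the block coming from the letter `ω k`. -/
def blockStart (S : A → List A) (ω : ℤ → A) (k : ℤ) : ℤ :=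
  if 0 ≤ k then ((List.range k.toNat).map fun i => ((S (ω i)).length : ℤ)).sum
  else -((List.range (-k).toNat).map fun i => ((S (ω (-(i : ℤ) - 1))).length : ℤ)).sum

open Classical in
/-- The extension of a substitution to two-sided configurations: the block structure of
`S ω` is `⋯ S(ω(-1)) . S(ω 0) S(ω 1) ⋯`, with the block of `ω 0` starting at position `0`. -/
noncomputable def confSub [Nonempty A] (S : A → List A) (ω : ℤ → A) : ℤ → A := fun n =>
  if h : ∃ k : ℤ, blockStart S ω k ≤ n ∧ n < blockStart S ω (k + 1) then
    (S (ω (Classical.choose h))).getD (n - blockStart S ω (Classical.choose h)).toNat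
      (Classical.arbitrary A)
  else Classical.arbitrary A

/-- The metric on configurations:
`d(ω₁, ω₂) = inf { 1/(r+1) : ω₁ and ω₂ agree on all |k| < r }`. -/
noncomputable def confDist (ω₁ ω₂ : ℤ → A) : ℝ :=
  sInf {x : ℝ | ∃ r : ℕ, x = 1 / (r + 1) ∧ ∀ k : ℤ, |k| < (r : ℤ) → ω₁ k = ω₂ k}

/-- Distance from a configuration to a set of configurations. -/
noncomputable def distToSet (ω : ℤ → A) (Ω : Set (ℤ → A)) : ℝ :=
  sInf (confDist ω '' Ω)

/-- The Hausdorff distance between two sets of configurations, induced by `confDist`. -/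
noncomputable def hausDist (Ω₁ Ω₂ : Set (ℤ → A)) : ℝ :=
  max (sSup ((fun ω => distToSet ω Ω₂) '' Ω₁)) (sSup ((fun ω => distToSet ω Ω₁) '' Ω₂))

/-- The product topology on `ℤ → A`, where `A` carries the discrete topology. -/
def confTop (A : Type*) : TopologicalSpace (ℤ → A) :=
  @Pi.topologicalSpace ℤ (fun _ => A) fun _ => ⊥

/-- The shift orbit of a configuration. -/
def orbit (ω : ℤ → A) : Set (ℤ → A) := {η | ∃ m : ℤ, η = shift m ω}

/-- The hull of a configuration: the closure of its shift orbit in the product topology. -/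
def hull (ω : ℤ → A) : Set (ℤ → A) := @closure _ (confTop A) (orbit ω)

/-- The `n`-th iterated hull `Ωₙ(ω₀)`: the hull of `Sⁿ(ω₀)`. -/
noncomputable def IHS [Nonempty A] (S : A → List A) (ω₀ : ℤ → A) (n : ℕ) : Set (ℤ → A) :=
  hull ((confSub S)^[n] ω₀)

/-- The substitution subshift `Ω(S) = {ω : W(ω) ⊆ W(S)}`. -/
def OmegaS (S : A → List A) : Set (ℤ → A) := {ω | ∀ u ∈ Dict ω, Legal S u}

/-- Edges of the directed graph `G(S)`: `u → w` iff `u, w` are both illegal and `w` is an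
infix of `S(u)`. -/
def GEdge (S : A → List A) (u w : List A) : Prop :=
  ¬Legal S u ∧ ¬Legal S w ∧ w <:+: wordSub S u

/-- `p` is a directed path of length `ℓ` in `G(S)` (on the vertex set of `2`-words). -/
def GPath (S : A → List A) (p : ℕ → List A) (ℓ : ℕ) : Prop :=
  (∀ i ≤ ℓ, (p i).length = 2) ∧ ∀ j < ℓ, GEdge S (p j) (p (j + 1))

/-- An initial configuration is good for `S` if every directed path in `G(S)` starting at a
`2`-word occurring in `ω₀` has length `< |A|²`. -/
def GoodInit [Fintype A] (S : A → List A) (ω₀ : ℤ → A) : Prop :=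
  ∀ (p : ℕ → List A) (ℓ : ℕ), GPath S p ℓ → Occurs (p 0) ω₀ → ℓ < (Fintype.card A) ^ 2

/-- The substitution matrix of `S`: `M(S)_{a,b}` is the number of occurrences of `a`
in `S(b)`. -/
def subMatrix [Fintype A] [DecidableEq A] (S : A → List A) : Matrix A A ℝ :=
  fun a b => ((S b).count a : ℝ)

/-- The Perron–Frobenius eigenvalue of `S`: the spectral radius of its substitution
matrix (viewed as a complex matrix). -/
noncomputable def pfEigenvalue [Fintype A] [DecidableEq A] (S : A → List A) : ℝ :=
  (spectralRadius ℂ ((subMatrix S).map (algebraMap ℝ ℂ))).toReal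

/-- The periodic configuration `u^∞`, satisfying `u^∞(n) = u(n mod |u|)`. -/
noncomputable def perConf [Nonempty A] (u : List A) : ℤ → A := fun n =>
  u.getD (n % (u.length : ℤ)).toNat (Classical.arbitrary A)

/-- `ℓ²(ℤ, ℂ)`. -/
abbrev l2Z : Type := lp (fun _ : ℤ => ℂ) 2

/-- `H` is the Schrödinger operator on `ℓ²(ℤ,ℂ)` with potential `v ∘ ω`:
`(H ψ)(n) = -(ψ(n+1) + ψ(n-1) - 2ψ(n)) + v(ω(n)) ψ(n)`. -/
def IsSchrodinger (v : A → ℝ) (ω : ℤ → A) (H : l2Z →L[ℂ] l2Z) : Prop :=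
  ∀ (ψ : l2Z) (n : ℤ),
    (H ψ : ℤ → ℂ) n = -((ψ : ℤ → ℂ) (n + 1) + (ψ : ℤ → ℂ) (n - 1) - 2 * (ψ : ℤ → ℂ) n)
      + (v (ω n) : ℂ) * (ψ : ℤ → ℂ) n

/-- The spectrum of `H`, viewed as a subset of `ℝ`. -/
def realSpectrum (H : l2Z →L[ℂ] l2Z) : Set ℝ := {x : ℝ | (x : ℂ) ∈ spectrum ℂ H}


/-! ### Auxiliary development -/

section Aux

variable {A : Type*}

/-- The word of `ω` at positions `[k, k+L)`. -/
def wordAt (ω : ℤ → A) (k : ℤ) (L : ℕ) : List A :=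
  (List.range L).map fun i : ℕ => ω (k + (i : ℤ))

theorem flatMap_singleton_map {β : Type*} (f : ℕ → β) (l : List ℕ) :
    l.flatMap (fun a => [f a]) = l.map f := by
  induction l with
  | nil => rfl
  | cons a t ih => simp [List.flatMap_cons, ih]

theorem occursBody_eq (ω : ℤ → A) (k : ℤ) (L : ℕ) :
    ((List.range L).map fun i => ω (k + i)) = wordAt ω k L := by
  show List.map _ ((List.range L).flatMap fun a => [((a : ℕ) : ℤ)]) = _
  rw [flatMap_singleton_map, List.map_map]
  rfl

theorem occurs_iff {u : List A} {ω : ℤ → A} :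
    Occurs u ω ↔ ∃ k : ℤ, u = wordAt ω k u.length := by
  unfold Occurs
  simp_rw [occursBody_eq]

@[simp] theorem wordAt_length (ω : ℤ → A) (k : ℤ) (L : ℕ) :
    (wordAt ω k L).length = L := by
  rw [wordAt, List.length_map, List.length_range]

@[simp] theorem wordAt_zero (ω : ℤ → A) (k : ℤ) : wordAt ω k 0 = [] := rfl

theorem wordAt_succ (ω : ℤ → A) (k : ℤ) (L : ℕ) :
    wordAt ω k (L + 1) = wordAt ω k L ++ [ω (k + L)] := by
  rw [wordAt, wordAt, List.range_succ, List.map_append, List.map_singleton]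

@[simp] theorem wordAt_one (ω : ℤ → A) (k : ℤ) : wordAt ω k 1 = [ω k] := by
  rw [← Nat.zero_add 1, wordAt_succ, wordAt_zero, List.nil_append, Int.natCast_zero, add_zero]

theorem wordAt_add (ω : ℤ → A) (k : ℤ) (L₁ L₂ : ℕ) :
    wordAt ω k (L₁ + L₂) = wordAt ω k L₁ ++ wordAt ω (k + L₁) L₂ := by
  induction L₂ with
  | zero => simp
  | succ n ih =>
      have h1 : L₁ + (n + 1) = (L₁ + n) + 1 := by ring
      rw [h1, wordAt_succ, ih, wordAt_succ, List.append_assoc]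
      congr 3
      push_cast; ring

theorem wordAt_getElem (ω : ℤ → A) (k : ℤ) (L : ℕ) (i : ℕ) (hi : i < L) :
    (wordAt ω k L)[i]'(by simpa using hi) = ω (k + i) := by
  simp only [wordAt]
  rw [List.getElem_map, List.getElem_range]

theorem wordAt_infix (ω : ℤ → A) {a k : ℤ} {L₁ L₂ : ℕ}
    (h1 : a ≤ k) (h2 : k + L₁ ≤ a + L₂) :
    wordAt ω k L₁ <:+: wordAt ω a L₂ := by
  set t : ℕ := (k - a).toNat with ht
  have hk : k = a + t := by
    have := Int.toNat_of_nonneg (sub_nonneg.mpr h1); omega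
  have htL : t + L₁ ≤ L₂ := by omega
  obtain ⟨s, hs⟩ := Nat.exists_eq_add_of_le htL
  rw [hs, wordAt_add, wordAt_add]
  refine ⟨wordAt ω a t, wordAt ω (a + (t + L₁ : ℕ)) s, ?_⟩
  rw [← hk]

theorem occurs_wordAt (ω : ℤ → A) (k : ℤ) (L : ℕ) : Occurs (wordAt ω k L) ω :=
  occurs_iff.mpr ⟨k, by rw [wordAt_length]⟩

theorem eq_wordAt_of_append {ω : ℤ → A} {x v y : List A} {k : ℤ} {L : ℕ}
    (hxy : x ++ v ++ y = wordAt ω k L) : v = wordAt ω (k + x.length) v.length := by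
  have hL : L = x.length + (v.length + y.length) := by
    have h := congrArg List.length hxy
    simp at h; omega
  rw [List.append_assoc] at hxy
  rw [hL, wordAt_add, wordAt_add] at hxy
  obtain ⟨hx, hvy⟩ := List.append_inj hxy (by simp)
  exact (List.append_inj hvy (by simp)).1

theorem occurs_of_infix_wordAt {v : List A} {ω : ℤ → A} {k : ℤ} {L : ℕ}
    (h : v <:+: wordAt ω k L) : Occurs v ω := by
  obtain ⟨x, y, hxy⟩ := h
  exact occurs_iff.mpr ⟨k + x.length, eq_wordAt_of_append hxy⟩

theorem Occurs.infix {u v : List A} {ω : ℤ → A} (hv : v <:+: u) (hu : Occurs u ω) :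
    Occurs v ω := by
  obtain ⟨k, hk⟩ := occurs_iff.mp hu
  exact occurs_of_infix_wordAt (hk ▸ hv)

/-! #### wordSub and Legal -/

theorem wordSub_nil (S : A → List A) : wordSub S [] = [] := rfl

theorem wordSub_append (S : A → List A) (u v : List A) :
    wordSub S (u ++ v) = wordSub S u ++ wordSub S v := by
  simp [wordSub]

theorem wordSub_singleton (S : A → List A) (a : A) : wordSub S [a] = S a := by
  simp [wordSub]

theorem wordSub_cons (S : A → List A) (a : A) (t : List A) :
    wordSub S (a :: t) = S a ++ wordSub S t := by
  simp [wordSub]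

theorem iterWordSub_append (S : A → List A) (m : ℕ) (u v : List A) :
    (wordSub S)^[m] (u ++ v) = (wordSub S)^[m] u ++ (wordSub S)^[m] v := by
  induction m generalizing u v with
  | zero => rfl
  | succ m ih => rw [Function.iterate_succ_apply, Function.iterate_succ_apply,
      Function.iterate_succ_apply, wordSub_append, ih]

theorem iterWordSub_ne_nil {S : A → List A} (hS : ∀ a, S a ≠ []) (m : ℕ) {u : List A}
    (hu : u ≠ []) : (wordSub S)^[m] u ≠ [] := by
  induction m generalizing u with
  | zero => exact hu
  | succ m ih =>
      rw [Function.iterate_succ_apply]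
      apply ih
      obtain ⟨a, t, rfl⟩ := List.exists_cons_of_ne_nil hu
      rw [wordSub_cons]
      simp [hS a]

theorem infix_wordSub {u v : List A} (S : A → List A) (h : u <:+: v) :
    wordSub S u <:+: wordSub S v := by
  obtain ⟨x, y, rfl⟩ := h
  rw [wordSub_append, wordSub_append]
  exact ⟨wordSub S x, wordSub S y, rfl⟩

theorem infix_iterWordSub {u v : List A} (S : A → List A) (m : ℕ) (h : u <:+: v) :
    (wordSub S)^[m] u <:+: (wordSub S)^[m] v := by
  induction m with
  | zero => exact h
  | succ m ih => rw [Function.iterate_succ_apply', Function.iterate_succ_apply']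
                 exact infix_wordSub S ih

theorem length_le_wordSub {S : A → List A} (hS : ∀ a, S a ≠ []) (u : List A) :
    u.length ≤ (wordSub S u).length := by
  induction u with
  | nil => simp [wordSub_nil]
  | cons a t ih =>
      rw [wordSub_cons, List.length_append, List.length_cons]
      have : 1 ≤ (S a).length := List.length_pos_iff.mpr (hS a)
      omega

theorem Legal.infix {S : A → List A} {u v : List A} (h : u <:+: v) (hv : Legal S v) :
    Legal S u := by
  obtain ⟨a, n, hn⟩ := hv
  exact ⟨a, n, h.trans hn⟩

theorem legal_singleton (S : A → List A) (a : A) : Legal S [a] :=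
  ⟨a, 0, List.infix_refl _⟩

theorem legal_wordSub {S : A → List A} {u : List A} (h : Legal S u) :
    Legal S (wordSub S u) := by
  obtain ⟨a, n, hn⟩ := h
  refine ⟨a, n + 1, ?_⟩
  rw [Function.iterate_succ_apply']
  exact infix_wordSub S hn

theorem legal_iterWordSub {S : A → List A} {u : List A} (h : Legal S u) (m : ℕ) :
    Legal S ((wordSub S)^[m] u) := by
  induction m with
  | zero => exact h
  | succ m ih => rw [Function.iterate_succ_apply']; exact legal_wordSub ih

/-! #### Primitivity consequences -/

theorem mem_iter_of_ge {S : A → List A} (hS : ∀ a, S a ≠ []) {p : ℕ}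
    (hp : ∀ a b : A, b ∈ (wordSub S)^[p] [a]) {t : ℕ} (ht : p ≤ t) (a b : A) :
    b ∈ (wordSub S)^[t] [a] := by
  obtain ⟨s, rfl⟩ := Nat.exists_eq_add_of_le ht
  rw [Function.iterate_add_apply]
  have hne : (wordSub S)^[s] [a] ≠ [] := iterWordSub_ne_nil hS s (by simp)
  obtain ⟨c, tail, hct⟩ := List.exists_cons_of_ne_nil hne
  rw [hct, show c :: tail = [c] ++ tail from rfl, iterWordSub_append]
  exact List.mem_append_left _ (hp c b)

/-- `minLenGe S m L`: every `m`-th iterated image of a letter has length at least `L`. -/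
def minLenGe (S : A → List A) (m L : ℕ) : Prop :=
  ∀ a : A, L ≤ ((wordSub S)^[m] [a]).length

theorem minLenGe_one {S : A → List A} (hS : ∀ a, S a ≠ []) (m : ℕ) : minLenGe S m 1 :=
  fun a => List.length_pos_iff.mpr (iterWordSub_ne_nil hS m (by simp))

theorem minLenGe.mono_len {S : A → List A} {m L L' : ℕ} (h : minLenGe S m L) (hL : L' ≤ L) :
    minLenGe S m L' := fun a => le_trans hL (h a)

theorem minLenGe.succ {S : A → List A} (hS : ∀ a, S a ≠ []) {m L : ℕ}
    (h : minLenGe S m L) : minLenGe S (m + 1) L := by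
  intro a
  rw [Function.iterate_succ_apply, wordSub_singleton]
  obtain ⟨c, tail, hct⟩ := List.exists_cons_of_ne_nil (hS a)
  rw [hct, show c :: tail = [c] ++ tail from rfl, iterWordSub_append, List.length_append]
  exact le_trans (h c) (Nat.le_add_right _ _)

theorem minLenGe.mono {S : A → List A} (hS : ∀ a, S a ≠ []) {m m' L : ℕ}
    (h : minLenGe S m L) (hm : m ≤ m') : minLenGe S m' L := by
  obtain ⟨s, rfl⟩ := Nat.exists_eq_add_of_le hm
  induction s with
  | zero => exact h
  | succ s ih => exact (ih (Nat.le_add_right _ _)).succ hS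

theorem minLenGe.grow {S : A → List A} (hS : ∀ a, S a ≠ []) {p : ℕ}
    (hp : ∀ a b : A, b ∈ (wordSub S)^[p] [a]) {a₀ : A} (ha₀ : 2 ≤ (S a₀).length)
    {m L : ℕ} (hL : 1 ≤ L) (h : minLenGe S m L) : minLenGe S (m + 1 + p) (L + 1) := by
  intro b
  -- (wordSub S)^[m+1+p] [b] = (wordSub S)^[m+1] ((wordSub S)^[p] [b])
  rw [show m + 1 + p = (m + 1) + p from rfl, Function.iterate_add_apply]
  obtain ⟨x, y, hxy⟩ := List.append_of_mem (hp b a₀)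
  rw [hxy, show x ++ a₀ :: y = x ++ [a₀] ++ y from by simp, iterWordSub_append,
    iterWordSub_append, List.length_append, List.length_append]
  have key : 2 * L ≤ ((wordSub S)^[m + 1] [a₀]).length := by
    rw [Function.iterate_succ_apply, wordSub_singleton]
    obtain ⟨c₁, t₁, h1⟩ := List.exists_cons_of_ne_nil (hS a₀)
    have ht₁ : t₁ ≠ [] := by
      intro hnil
      rw [h1, hnil] at ha₀
      simp at ha₀
    obtain ⟨c₂, t₂, h2⟩ := List.exists_cons_of_ne_nil ht₁
    rw [h1, h2, show c₁ :: c₂ :: t₂ = [c₁] ++ ([c₂] ++ t₂) from rfl, iterWordSub_append,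
      iterWordSub_append, List.length_append, List.length_append]
    have := h c₁
    have := h c₂
    omega
  omega

theorem exists_minLenGe {S : A → List A} (hS : ∀ a, S a ≠ []) {p : ℕ}
    (hp : ∀ a b : A, b ∈ (wordSub S)^[p] [a]) {a₀ : A} (ha₀ : 2 ≤ (S a₀).length) (L : ℕ) :
    ∃ m : ℕ, ∀ m' : ℕ, m ≤ m' → minLenGe S m' (L + 1) := by
  induction L with
  | zero => exact ⟨0, fun m' _ => minLenGe_one hS m'⟩
  | succ L ih =>
      obtain ⟨m, hm⟩ := ih
      refine ⟨m + 1 + p, fun m' hm' => ?_⟩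
      exact ((hm m (le_refl m)).grow hS hp ha₀ (Nat.le_add_left 1 L)).mono hS hm'

/-! #### blockStart and confSub -/

theorem int_ivt {f : ℤ → ℤ} {a b n : ℤ} (hab : a ≤ b) (ha : f a ≤ n) (hb : n < f b) :
    ∃ k, f k ≤ n ∧ n < f (k + 1) := by
  obtain ⟨s, rfl⟩ : ∃ s : ℕ, b = a + s := ⟨(b - a).toNat, by omega⟩
  clear hab
  induction s generalizing a with
  | zero => simp at hb; omega
  | succ s ih =>
      by_cases h : f (a + 1) ≤ n
      · have hb' : n < f (a + 1 + s) := by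
          have heq : a + ((s : ℕ) + 1 : ℕ) = a + 1 + (s : ℕ) := by push_cast; ring
          rwa [heq] at hb
        exact ih h hb'
      · exact ⟨a, ha, by omega⟩

theorem bs_def (S : A → List A) (ω : ℤ → A) (k : ℤ) : blockStart S ω k =
    if 0 ≤ k then ((List.range k.toNat).map fun i : ℕ => ((S (ω (i : ℤ))).length : ℤ)).sum
    else -(((List.range (-k).toNat).map
      fun i : ℕ => ((S (ω (-(i : ℤ) - 1))).length : ℤ)).sum) := by
  unfold blockStart
  rcases le_or_gt 0 k with hk | hk
  · rw [if_pos hk, if_pos hk]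
    show (List.map _ ((List.range _).flatMap fun a => [((a : ℕ) : ℤ)])).sum = _
    rw [flatMap_singleton_map, List.map_map]
    rfl
  · rw [if_neg (by omega), if_neg (by omega)]
    show -(List.map _ ((List.range _).flatMap fun a => [((a : ℕ) : ℤ)])).sum = _
    rw [flatMap_singleton_map, List.map_map]
    rfl

theorem bs_zero (S : A → List A) (ω : ℤ → A) : blockStart S ω 0 = 0 := by
  simp [blockStart]

theorem bs_succ (S : A → List A) (ω : ℤ → A) (k : ℤ) :
    blockStart S ω (k + 1) = blockStart S ω k + ((S (ω k)).length : ℤ) := by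
  rw [bs_def, bs_def]
  rcases lt_trichotomy k (-1) with hk | hk | hk
  · rw [if_neg (by omega), if_neg (by omega)]
    have h1 : (-k).toNat = (-(k + 1)).toNat + 1 := by omega
    rw [h1, List.range_succ, List.map_append, List.sum_append]
    have h2 : (-(((-(k + 1)).toNat : ℤ)) - 1) = k := by omega
    simp only [List.map_cons, List.map_nil, List.sum_cons, List.sum_nil]
    rw [h2]
    omega
  · subst hk
    rw [if_pos (by omega), if_neg (by omega)]
    have h0 : ((-1 : ℤ) + 1).toNat = 0 := by omega
    have h1 : (-(-1 : ℤ)).toNat = 1 := by omega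
    rw [h0, h1, List.range_zero, List.range_succ, List.range_zero]
    simp
  · rw [if_pos (by omega), if_pos (by omega)]
    have h1 : (k + 1).toNat = k.toNat + 1 := by omega
    rw [h1, List.range_succ, List.map_append, List.sum_append]
    have h2 : ((k.toNat : ℤ)) = k := Int.toNat_of_nonneg (by omega)
    simp [h2]

theorem bs_succ_ge {S : A → List A} (hS : ∀ a, S a ≠ []) (ω : ℤ → A) (k : ℤ) :
    blockStart S ω k + 1 ≤ blockStart S ω (k + 1) := by
  have h := bs_succ S ω k
  have : 1 ≤ (S (ω k)).length := List.length_pos_iff.mpr (hS (ω k))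
  omega

theorem bs_mono {S : A → List A} (hS : ∀ a, S a ≠ []) (ω : ℤ → A) {a b : ℤ} (hab : a ≤ b) :
    blockStart S ω a ≤ blockStart S ω b := by
  obtain ⟨s, rfl⟩ : ∃ s : ℕ, b = a + s := ⟨(b - a).toNat, by omega⟩
  clear hab
  induction s with
  | zero => simp
  | succ s ih =>
      have h1 : a + ((s : ℕ) + 1 : ℕ) = (a + s) + 1 := by push_cast; ring
      rw [h1]
      have := bs_succ_ge hS ω (a + s)
      omega

theorem bs_cover {S : A → List A} (hS : ∀ a, S a ≠ []) (ω : ℤ → A) (n : ℤ) :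
    ∃ k, blockStart S ω k ≤ n ∧ n < blockStart S ω (k + 1) := by
  have hup : ∀ m : ℕ, (m : ℤ) ≤ blockStart S ω m := by
    intro m
    induction m with
    | zero => norm_num [bs_zero]
    | succ m ih =>
        have h1 : ((m + 1 : ℕ) : ℤ) = (m : ℤ) + 1 := by push_cast; ring
        rw [h1]
        have := bs_succ_ge hS ω m
        omega
  have hdown : ∀ m : ℕ, blockStart S ω (-(m : ℤ)) ≤ -(m : ℤ) := by
    intro m
    induction m with
    | zero => rw [Int.natCast_zero, neg_zero, bs_zero]
    | succ m ih =>
        have h1 : (-(m : ℤ)) = (-(((m + 1 : ℕ) : ℤ))) + 1 := by push_cast; ring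
        rw [h1] at ih
        have := bs_succ_ge hS ω (-(((m + 1 : ℕ) : ℤ)))
        omega
  rcases le_or_gt 0 n with hn | hn
  · have h2 : ((n + 1).toNat : ℤ) = n + 1 := by omega
    have h3 := hup (n + 1).toNat
    rw [h2] at h3
    exact int_ivt (a := 0) (b := n + 1) (by omega) (by rw [bs_zero]; exact hn) (by omega)
  · have h2 : (-(((-n).toNat : ℤ))) = n := by omega
    have h3 := hdown (-n).toNat
    rw [h2] at h3
    exact int_ivt (a := n) (b := 0) (by omega) (by omega) (by rw [bs_zero]; exact hn)

theorem bs_unique {S : A → List A} (hS : ∀ a, S a ≠ []) (ω : ℤ → A) {k k' n : ℤ}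
    (h1 : blockStart S ω k ≤ n) (h2 : n < blockStart S ω (k + 1))
    (h1' : blockStart S ω k' ≤ n) (h2' : n < blockStart S ω (k' + 1)) : k = k' := by
  by_contra hne
  rcases lt_or_gt_of_ne hne with h | h
  · have := bs_mono hS ω (show k + 1 ≤ k' from by omega)
    omega
  · have := bs_mono hS ω (show k' + 1 ≤ k from by omega)
    omega

theorem confSub_eq [Nonempty A] {S : A → List A} (hS : ∀ a, S a ≠ []) (ω : ℤ → A)
    {k n : ℤ} (h1 : blockStart S ω k ≤ n) (h2 : n < blockStart S ω (k + 1)) :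
    confSub S ω n = (S (ω k)).getD (n - blockStart S ω k).toNat (Classical.arbitrary A) := by
  unfold confSub
  have hex : ∃ k : ℤ, blockStart S ω k ≤ n ∧ n < blockStart S ω (k + 1) := ⟨k, h1, h2⟩
  rw [dif_pos hex]
  have hspec := Classical.choose_spec hex
  have : Classical.choose hex = k := bs_unique hS ω hspec.1 hspec.2 h1 h2
  rw [this]

theorem block_content [Nonempty A] {S : A → List A} (hS : ∀ a, S a ≠ []) (ω : ℤ → A)
    (k : ℤ) : wordAt (confSub S ω) (blockStart S ω k) (S (ω k)).length = S (ω k) := by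
  apply List.ext_getElem (by simp)
  intro i h1 h2
  rw [wordAt_getElem _ _ _ i (by simpa using h1)]
  have hi : i < (S (ω k)).length := h2
  have h3 : blockStart S ω k ≤ blockStart S ω k + i := by omega
  have h4 : blockStart S ω k + i < blockStart S ω (k + 1) := by
    have := bs_succ S ω k
    omega
  rw [confSub_eq hS ω h3 h4]
  have h5 : (blockStart S ω k + (i : ℤ) - blockStart S ω k).toNat = i := by omega
  rw [h5]
  exact List.getD_eq_getElem _ _ hi

theorem bs_add {S : A → List A} (ω : ℤ → A) (k : ℤ) (t : ℕ) :
    blockStart S ω (k + t) = blockStart S ω k + ((wordSub S (wordAt ω k t)).length : ℤ) := by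
  induction t with
  | zero => simp [wordSub_nil]
  | succ t ih =>
      have h1 : k + ((t : ℕ) + 1 : ℕ) = (k + t) + 1 := by push_cast; ring
      rw [h1, bs_succ, ih, wordAt_succ, wordSub_append, wordSub_singleton,
        List.length_append]
      push_cast
      ring

theorem lemA [Nonempty A] {S : A → List A} (hS : ∀ a, S a ≠ []) (ω : ℤ → A) (k : ℤ)
    (t : ℕ) :
    wordAt (confSub S ω) (blockStart S ω k) (wordSub S (wordAt ω k t)).length
      = wordSub S (wordAt ω k t) := by
  induction t with
  | zero => simp [wordSub_nil]
  | succ t ih =>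
      rw [wordAt_succ, wordSub_append, wordSub_singleton, List.length_append,
        wordAt_add, ih]
      congr 1
      have h1 : blockStart S ω k + ((wordSub S (wordAt ω k t)).length : ℤ)
          = blockStart S ω (k + t) := (bs_add ω k t).symm
      rw [h1]
      exact block_content hS ω (k + t)

/-! #### Multi-step block structure -/

/-- Starting position in `(confSub S)^[m] ω` of the block coming from `ω j`. -/
noncomputable def bsM [Nonempty A] (S : A → List A) (ω : ℤ → A) : ℕ → ℤ → ℤ
  | 0, j => j
  | (m + 1), j => blockStart S ((confSub S)^[m] ω) (bsM S ω m j)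

theorem cover_of_steps {f : ℤ → ℤ} (h0 : f 0 = 0) (hstep : ∀ k, f k + 1 ≤ f (k + 1))
    (n : ℤ) : ∃ k, f k ≤ n ∧ n < f (k + 1) := by
  have hup : ∀ m : ℕ, (m : ℤ) ≤ f m := by
    intro m
    induction m with
    | zero => norm_num [h0]
    | succ m ih =>
        have h1 : ((m + 1 : ℕ) : ℤ) = (m : ℤ) + 1 := by push_cast; ring
        rw [h1]
        have := hstep m
        omega
  have hdown : ∀ m : ℕ, f (-(m : ℤ)) ≤ -(m : ℤ) := by
    intro m
    induction m with
    | zero => norm_num [h0]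
    | succ m ih =>
        have h1 : (-(m : ℤ)) = (-(((m + 1 : ℕ) : ℤ))) + 1 := by push_cast; ring
        rw [h1] at ih
        have := hstep (-(((m + 1 : ℕ) : ℤ)))
        omega
  rcases le_or_gt 0 n with hn | hn
  · have h2 : ((n + 1).toNat : ℤ) = n + 1 := by omega
    have h3 := hup (n + 1).toNat
    rw [h2] at h3
    exact int_ivt (a := 0) (b := n + 1) (by omega) (by omega) (by omega)
  · have h2 : (-(((-n).toNat : ℤ))) = n := by omega
    have h3 := hdown (-n).toNat
    rw [h2] at h3
    exact int_ivt (a := n) (b := 0) (by omega) (by omega) (by omega)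

theorem bsM_main [Nonempty A] {S : A → List A} (hS : ∀ a, S a ≠ []) (ω : ℤ → A) (m : ℕ) :
    (∀ (j : ℤ) (s : ℕ), bsM S ω m (j + s)
        = bsM S ω m j + (((wordSub S)^[m] (wordAt ω j s)).length : ℤ)) ∧
    (∀ (j : ℤ) (s : ℕ), wordAt ((confSub S)^[m] ω) (bsM S ω m j)
        ((wordSub S)^[m] (wordAt ω j s)).length = (wordSub S)^[m] (wordAt ω j s)) := by
  induction m with
  | zero =>
      constructor
      · intro j s
        simp [bsM]
      · intro j s
        simp only [Function.iterate_zero, id_eq, bsM]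
        rw [wordAt_length]
  | succ m ih =>
      obtain ⟨Ha, Hb⟩ := ih
      have hconf : (confSub S)^[m + 1] ω = confSub S ((confSub S)^[m] ω) :=
        Function.iterate_succ_apply' _ _ _
      have hws : ∀ u : List A, (wordSub S)^[m + 1] u = wordSub S ((wordSub S)^[m] u) :=
        fun u => Function.iterate_succ_apply' _ _ _
      constructor
      · intro j s
        show blockStart S ((confSub S)^[m] ω) (bsM S ω m (j + s)) = _
        rw [Ha j s, bs_add, Hb j s, hws]
        rfl
      · intro j s
        rw [hconf, hws]
        show wordAt _ (blockStart S ((confSub S)^[m] ω) (bsM S ω m j)) _ = _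
        conv_lhs => rw [← Hb j s]
        rw [lemA hS ((confSub S)^[m] ω) (bsM S ω m j)
          (((wordSub S)^[m] (wordAt ω j s)).length), Hb j s]

theorem bsM_zero [Nonempty A] {S : A → List A} (ω : ℤ → A) (m : ℕ) : bsM S ω m 0 = 0 := by
  induction m with
  | zero => rfl
  | succ m ih => show blockStart S _ (bsM S ω m 0) = 0
                 rw [ih, bs_zero]

theorem bsM_step [Nonempty A] {S : A → List A} (hS : ∀ a, S a ≠ []) (ω : ℤ → A) (m : ℕ)
    (j : ℤ) : bsM S ω m (j + 1) = bsM S ω m j + (((wordSub S)^[m] [ω j]).length : ℤ) := by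
  have := (bsM_main hS ω m).1 j 1
  rw [wordAt_one] at this
  exact_mod_cast this

theorem bsM_cover [Nonempty A] {S : A → List A} (hS : ∀ a, S a ≠ []) (ω : ℤ → A) (m : ℕ)
    (n : ℤ) : ∃ j, bsM S ω m j ≤ n ∧ n < bsM S ω m (j + 1) := by
  apply cover_of_steps (bsM_zero ω m)
  intro k
  rw [bsM_step hS ω m k]
  have h1 : (wordSub S)^[m] [ω k] ≠ [] := iterWordSub_ne_nil hS m (by simp)
  have := List.length_pos_iff.mpr h1
  omega

theorem occurs_iterConfSub [Nonempty A] {S : A → List A} (hS : ∀ a, S a ≠ [])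
    {u : List A} {ω : ℤ → A} (h : Occurs u ω) (m : ℕ) :
    Occurs ((wordSub S)^[m] u) ((confSub S)^[m] ω) := by
  obtain ⟨k, hk⟩ := occurs_iff.mp h
  have hb := (bsM_main hS ω m).2 k u.length
  rw [← hk] at hb
  exact occurs_iff.mpr ⟨bsM S ω m k, hb.symm⟩

theorem lemB [Nonempty A] {S : A → List A} (hS : ∀ a, S a ≠ []) {m L : ℕ}
    (hmL : minLenGe S m L) (hL : 1 ≤ L) {v : List A} {ω : ℤ → A}
    (hv : Occurs v ((confSub S)^[m] ω)) (hvlen : v.length ≤ L + 1) :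
    ∃ w : List A, Occurs w ω ∧ w.length = 2 ∧ v <:+: (wordSub S)^[m] w := by
  obtain ⟨k, hk⟩ := occurs_iff.mp hv
  obtain ⟨j, hj1, hj2⟩ := bsM_cover hS ω m k
  refine ⟨wordAt ω j 2, occurs_wordAt ω j 2, wordAt_length ω j 2, ?_⟩
  have hb := (bsM_main hS ω m).2 j 2
  have hadd2 := (bsM_main hS ω m).1 j 2
  have hadd1 := (bsM_main hS ω m).1 j 1
  have hstep : bsM S ω m (j + 1 + 1) = bsM S ω m (j + 1)
      + (((wordSub S)^[m] [ω (j + 1)]).length : ℤ) := bsM_step hS ω m (j + 1)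
  have hlen2 : L ≤ ((wordSub S)^[m] [ω (j + 1)]).length := hmL (ω (j + 1))
  have hcov : k + (v.length : ℤ)
      ≤ bsM S ω m j + (((wordSub S)^[m] (wordAt ω j 2)).length : ℤ) := by
    rw [← hadd2]
    have h21 : j + (2 : ℕ) = j + 1 + 1 := by push_cast; ring
    rw [h21, hstep]
    omega
  have hinf := wordAt_infix ((confSub S)^[m] ω) (a := bsM S ω m j) (k := k)
    (L₁ := v.length) (L₂ := ((wordSub S)^[m] (wordAt ω j 2)).length) hj1 hcov
  rw [← hk, hb] at hinf
  exact hinf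

/-! #### Hull and metric lemmas -/

theorem wordAt_shift (ω : ℤ → A) (m k : ℤ) (L : ℕ) :
    wordAt (shift m ω) k L = wordAt ω (k - m) L := by
  apply List.ext_getElem (by simp)
  intro i h1 h2
  rw [wordAt_getElem _ _ _ i (by simpa using h1), wordAt_getElem _ _ _ i (by simpa using h2)]
  show ω (k + i - m) = ω (k - m + i)
  congr 1
  ring

theorem orbit_subset_hull (ω : ℤ → A) : orbit ω ⊆ hull ω :=
  @subset_closure (ℤ → A) (confTop A) (orbit ω)

theorem mem_hull_self (ω : ℤ → A) : ω ∈ hull ω :=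
  orbit_subset_hull ω ⟨0, by funext n; simp [shift]⟩

theorem shift_mem_hull (ω : ℤ → A) (m : ℤ) : shift m ω ∈ hull ω :=
  orbit_subset_hull ω ⟨m, rfl⟩

theorem occurs_of_mem_hull {η ω : ℤ → A} (h : η ∈ hull ω) (k : ℤ) (L : ℕ) :
    Occurs (wordAt η k L) ω := by
  letI : TopologicalSpace A := ⊥
  haveI : DiscreteTopology A := ⟨rfl⟩
  letI : TopologicalSpace (ℤ → A) := confTop A
  have hcl : η ∈ closure (orbit ω) := h
  set U : Set (ℤ → A) := {ζ | ∀ i : ℕ, i < L → ζ (k + i) = η (k + i)} with hUdef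
  have hU : IsOpen U := by
    have hU2 : U = ⋂ i ∈ Finset.range L, {ζ : ℤ → A | ζ (k + i) = η (k + i)} := by
      ext ζ; simp [hUdef]
    rw [hU2]
    apply isOpen_biInter_finset
    intro i _
    show IsOpen ((fun ζ : ℤ → A => ζ (k + (i : ℤ))) ⁻¹' {η (k + (i : ℤ))})
    exact (isOpen_discrete _).preimage (continuous_apply (k + (i : ℤ)))
  have hmem : η ∈ U := fun i _ => rfl
  obtain ⟨ζ, hζU, hζorb⟩ := mem_closure_iff.mp hcl U hU hmem
  obtain ⟨m, rfl⟩ := hζorb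
  have heq : wordAt η k L = wordAt (shift m ω) k L := by
    apply List.ext_getElem (by simp)
    intro i h1 h2
    rw [wordAt_getElem _ _ _ i (by simpa using h1), wordAt_getElem _ _ _ i (by simpa using h2)]
    exact (hζU i (by simpa using h1)).symm
  rw [heq, wordAt_shift]
  exact occurs_wordAt ω (k - m) L

theorem confDist_mem_bddBelow (ω₁ ω₂ : ℤ → A) :
    BddBelow {x : ℝ | ∃ r : ℕ, x = 1 / (r + 1) ∧ ∀ k : ℤ, |k| < (r : ℤ) → ω₁ k = ω₂ k} := by
  refine ⟨0, fun x hx => ?_⟩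
  obtain ⟨r, hr, -⟩ := hx
  rw [hr]
  positivity

theorem confDist_nonneg (ω₁ ω₂ : ℤ → A) : 0 ≤ confDist ω₁ ω₂ := by
  apply Real.sInf_nonneg
  intro x hx
  obtain ⟨r, hr, -⟩ := hx
  rw [hr]
  positivity

theorem confDist_le {ω₁ ω₂ : ℤ → A} {r : ℕ} (h : ∀ k : ℤ, |k| < (r : ℤ) → ω₁ k = ω₂ k) :
    confDist ω₁ ω₂ ≤ 1 / (r + 1) :=
  csInf_le (confDist_mem_bddBelow ω₁ ω₂) ⟨r, rfl, h⟩

theorem confDist_le_one (ω₁ ω₂ : ℤ → A) : confDist ω₁ ω₂ ≤ 1 := by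
  have h := confDist_le (ω₁ := ω₁) (ω₂ := ω₂) (r := 0) (fun k hk => by
    have := abs_nonneg k; omega)
  simpa using h

theorem le_confDist {ω₁ ω₂ : ℤ → A} {c : ℝ}
    (h : ∀ r : ℕ, (∀ k : ℤ, |k| < (r : ℤ) → ω₁ k = ω₂ k) → c ≤ 1 / (r + 1)) :
    c ≤ confDist ω₁ ω₂ := by
  apply le_csInf
  · exact ⟨1, 0, by norm_num, fun k hk => by have := abs_nonneg k; omega⟩
  · rintro x ⟨r, rfl, hr⟩
    exact h r hr

theorem distToSet_nonneg (ω : ℤ → A) (Ω : Set (ℤ → A)) : 0 ≤ distToSet ω Ω := by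
  apply Real.sInf_nonneg
  rintro x ⟨ω', -, rfl⟩
  exact confDist_nonneg ω ω'

theorem distToSet_bddBelow (ω : ℤ → A) (Ω : Set (ℤ → A)) :
    BddBelow (confDist ω '' Ω) := by
  refine ⟨0, ?_⟩
  rintro x ⟨ω', -, rfl⟩
  exact confDist_nonneg ω ω'

theorem distToSet_le_of_mem {ω ω' : ℤ → A} {Ω : Set (ℤ → A)} (h : ω' ∈ Ω) :
    distToSet ω Ω ≤ confDist ω ω' :=
  csInf_le (distToSet_bddBelow ω Ω) (Set.mem_image_of_mem _ h)

theorem distToSet_le_one (ω : ℤ → A) (Ω : Set (ℤ → A)) : distToSet ω Ω ≤ 1 := by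
  rcases Ω.eq_empty_or_nonempty with rfl | ⟨ω', hω'⟩
  · simp [distToSet, Real.sInf_empty]
  · exact le_trans (distToSet_le_of_mem hω') (confDist_le_one ω ω')

theorem le_distToSet {ω : ℤ → A} {Ω : Set (ℤ → A)} {c : ℝ} (hne : Ω.Nonempty)
    (h : ∀ ω' ∈ Ω, c ≤ confDist ω ω') : c ≤ distToSet ω Ω := by
  apply le_csInf (hne.image _)
  rintro x ⟨ω', hω', rfl⟩
  exact h ω' hω'

theorem hausDist_le {Ω₁ Ω₂ : Set (ℤ → A)} {c : ℝ} (hc : 0 ≤ c)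
    (h1 : ∀ η ∈ Ω₁, distToSet η Ω₂ ≤ c) (h2 : ∀ ω ∈ Ω₂, distToSet ω Ω₁ ≤ c) :
    hausDist Ω₁ Ω₂ ≤ c := by
  apply max_le
  · apply Real.sSup_le _ hc
    rintro x ⟨η, hη, rfl⟩
    exact h1 η hη
  · apply Real.sSup_le _ hc
    rintro x ⟨ω, hω, rfl⟩
    exact h2 ω hω

theorem le_hausDist_left {Ω₁ Ω₂ : Set (ℤ → A)} {η : ℤ → A} (hη : η ∈ Ω₁) :
    distToSet η Ω₂ ≤ hausDist Ω₁ Ω₂ := by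
  refine le_trans ?_ (le_max_left _ _)
  apply le_csSup
  · refine ⟨1, ?_⟩
    rintro x ⟨ω, hω, rfl⟩
    exact distToSet_le_one ω Ω₂
  · exact Set.mem_image_of_mem _ hη

theorem hausDist_nonneg {Ω₁ Ω₂ : Set (ℤ → A)} (h : Ω₁.Nonempty) :
    0 ≤ hausDist Ω₁ Ω₂ :=
  le_trans (distToSet_nonneg _ _) (le_hausDist_left h.choose_spec)

/-! #### Extension of legal words to legal configurations -/

theorem surround {S : A → List A} (hS : ∀ a, S a ≠ []) {p : ℕ}
    (hp : ∀ a b : A, b ∈ (wordSub S)^[p] [a]) {q : ℕ} (hq : p ≤ q)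
    (hq3 : minLenGe S q 3) (a : A) :
    ∃ x y : List A, x ≠ [] ∧ y ≠ [] ∧ (wordSub S)^[q + q] [a] = x ++ a :: y := by
  have h3 : 3 ≤ ((wordSub S)^[q] [a]).length := hq3 a
  obtain ⟨d₁, t₁, h1⟩ := List.exists_cons_of_ne_nil (show (wordSub S)^[q] [a] ≠ [] by
    intro h; rw [h] at h3; simp at h3)
  have ht₁ : t₁ ≠ [] := by
    intro h; rw [h] at h1; rw [h1] at h3; simp at h3
  obtain ⟨d₂, t₂, h2⟩ := List.exists_cons_of_ne_nil ht₁
  have ht₂ : t₂ ≠ [] := by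
    intro h; rw [h] at h2; rw [h2] at h1; rw [h1] at h3; simp at h3
  obtain ⟨x₂, y₂, hxy₂⟩ := List.append_of_mem (mem_iter_of_ge hS hp hq d₂ a)
  refine ⟨(wordSub S)^[q] [d₁] ++ x₂, y₂ ++ (wordSub S)^[q] t₂, ?_, ?_, ?_⟩
  · intro h
    exact iterWordSub_ne_nil hS q (show [d₁] ≠ [] by simp) (by
      rcases List.append_eq_nil_iff.mp h with ⟨h', -⟩; exact h')
  · intro h
    exact iterWordSub_ne_nil hS q ht₂ (by
      rcases List.append_eq_nil_iff.mp h with ⟨-, h'⟩; exact h')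
  · rw [Function.iterate_add_apply, h1, h2]
    rw [show d₁ :: d₂ :: t₂ = [d₁] ++ [d₂] ++ t₂ from rfl, iterWordSub_append,
      iterWordSub_append, hxy₂]
    simp

theorem margins {S : A → List A} (hS : ∀ a, S a ≠ []) {p : ℕ}
    (hp : ∀ a b : A, b ∈ (wordSub S)^[p] [a]) {q : ℕ} (hq : p ≤ q)
    (hq3 : minLenGe S q 3) {v : List A} {a : A} {m : ℕ} (hv : v <:+: (wordSub S)^[m] [a])
    (n : ℕ) :
    ∃ X Y : List A, n ≤ X.length ∧ n ≤ Y.length ∧ Legal S (X ++ v ++ Y) := by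
  obtain ⟨x, y, hx, hy, hxy⟩ := surround hS hp hq hq3 a
  suffices h : ∀ n : ℕ, ∃ X Y : List A, n ≤ X.length ∧ n ≤ Y.length ∧
      (X ++ v ++ Y) <:+: (wordSub S)^[m + n * (q + q)] [a] by
    obtain ⟨X, Y, hX, hY, hinf⟩ := h n
    exact ⟨X, Y, hX, hY, ⟨a, m + n * (q + q), hinf⟩⟩
  intro n
  induction n with
  | zero => exact ⟨[], [], le_refl 0, le_refl 0, by simpa using hv⟩
  | succ n ih =>
      obtain ⟨X, Y, hX, hY, hinf⟩ := ih
      obtain ⟨x', y', hx'y'⟩ := hinf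
      have harith : m + (n + 1) * (q + q) = (m + n * (q + q)) + (q + q) := by ring
      rw [harith, Function.iterate_add_apply, hxy,
        show x ++ a :: y = x ++ [a] ++ y from by simp, iterWordSub_append, iterWordSub_append,
        ← hx'y']
      refine ⟨(wordSub S)^[m + n * (q + q)] x ++ x' ++ X,
        Y ++ (y' ++ (wordSub S)^[m + n * (q + q)] y), ?_, ?_, ?_⟩
      · have h1 : 1 ≤ ((wordSub S)^[m + n * (q + q)] x).length :=
          List.length_pos_iff.mpr (iterWordSub_ne_nil hS _ hx)
        simp only [List.length_append]
        omega
      · have h1 : 1 ≤ ((wordSub S)^[m + n * (q + q)] y).length :=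
          List.length_pos_iff.mpr (iterWordSub_ne_nil hS _ hy)
        simp only [List.length_append]
        omega
      · refine ⟨[], [], ?_⟩
        simp only [List.append_assoc, List.nil_append, List.append_nil]

theorem isClosed_wordAt_eq [Nonempty A] {w : List A} {a : ℤ} {N : ℕ} :
    @IsClosed (ℤ → A) (confTop A) {ω | wordAt ω a N = w} := by
  letI : TopologicalSpace A := ⊥
  haveI : DiscreteTopology A := ⟨rfl⟩
  letI : TopologicalSpace (ℤ → A) := confTop A
  by_cases hlen : w.length = N
  · have hset : {ω : ℤ → A | wordAt ω a N = w}
        = ⋂ i : ℕ, ⋂ (_ : i < N),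
            {ω : ℤ → A | ω (a + (i : ℤ)) = w.getD i (Classical.arbitrary A)} := by
      ext ω
      simp only [Set.mem_setOf_eq, Set.mem_iInter]
      constructor
      · intro h i hi
        have h2 : i < w.length := by omega
        calc ω (a + (i : ℤ)) = (wordAt ω a N)[i]'(by simpa using hi) :=
              (wordAt_getElem ω a N i hi).symm
          _ = w[i]'h2 := List.getElem_of_eq h (by simpa using hi)
          _ = w.getD i (Classical.arbitrary A) := (List.getD_eq_getElem w _ h2).symm
      · intro h
        apply List.ext_getElem (by rw [wordAt_length, hlen])
        intro i h1 h2
        rw [wordAt_getElem ω a N i (by simpa using h1)]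
        rw [h i (by simpa using h1)]
        exact List.getD_eq_getElem w _ h2
    rw [hset]
    refine isClosed_iInter fun i => isClosed_iInter fun _ => ?_
    show IsClosed ((fun ω : ℤ → A => ω (a + (i : ℤ))) ⁻¹' {w.getD i (Classical.arbitrary A)})
    exact (isClosed_discrete _).preimage (continuous_apply _)
  · have hset : {ω : ℤ → A | wordAt ω a N = w} = ∅ := by
      ext ω
      simp only [Set.mem_setOf_eq, Set.mem_empty_iff_false, iff_false]
      intro h
      apply hlen
      rw [← h, wordAt_length]
    rw [hset]
    exact isClosed_empty

theorem exists_omegaS_matching [Fintype A] [Nonempty A] {S : A → List A}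
    (hS : ∀ a, S a ≠ []) {p : ℕ} (hp : ∀ a b : A, b ∈ (wordSub S)^[p] [a])
    {a₀ : A} (ha₀ : 2 ≤ (S a₀).length) {v : List A} (hv : Legal S v) (c : ℤ) :
    ∃ ω' ∈ OmegaS S, v = wordAt ω' c v.length := by
  letI : TopologicalSpace A := ⊥
  haveI : DiscreteTopology A := ⟨rfl⟩
  letI : TopologicalSpace (ℤ → A) := confTop A
  haveI : CompactSpace (ℤ → A) := by
    haveI : CompactSpace A := Finite.compactSpace
    exact Pi.compactSpace
  obtain ⟨q₀, hq₀⟩ := exists_minLenGe hS hp ha₀ 2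
  have hq3 : minLenGe S (max q₀ p) 3 := hq₀ _ (le_max_left _ _)
  have hqp : p ≤ max q₀ p := le_max_right _ _
  obtain ⟨α, m, hvm⟩ := hv
  have hmarg := fun n => margins hS hp hqp hq3 hvm n
  set G : ℕ → Set (ℤ → A) :=
    fun n => {ω | Legal S (wordAt ω (c - n) (v.length + 2 * n)) ∧ wordAt ω c v.length = v}
    with hGdef
  have hsub : ∀ n, G (n + 1) ⊆ G n := by
    intro n ω hω
    obtain ⟨h1, h2⟩ := hω
    refine ⟨Legal.infix ?_ h1, h2⟩
    apply wordAt_infix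
    · push_cast; omega
    · push_cast; omega
  have hne : ∀ n, (G n).Nonempty := by
    intro n
    obtain ⟨X, Y, hX, hY, hleg⟩ := hmarg n
    set ω₂ : ℤ → A := fun j =>
      (X ++ v ++ Y).getD (j - (c - X.length)).toNat (Classical.arbitrary A) with hω₂
    have hωtot : wordAt ω₂ (c - X.length) (X ++ v ++ Y).length = X ++ v ++ Y := by
      apply List.ext_getElem (by simp)
      intro i h1 h2
      rw [wordAt_getElem _ _ _ i (by simpa using h1)]
      show (X ++ v ++ Y).getD ((c - (X.length : ℤ) + i) - (c - (X.length : ℤ))).toNat _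
        = (X ++ v ++ Y)[i]
      have hidx : ((c - (X.length : ℤ) + i) - (c - (X.length : ℤ))).toNat = i := by omega
      rw [hidx]
      exact List.getD_eq_getElem _ _ h2
    have hmatch : v = wordAt ω₂ c v.length := by
      have h := eq_wordAt_of_append (ω := ω₂) (x := X) (v := v) (y := Y)
        (k := c - X.length) (L := (X ++ v ++ Y).length) hωtot.symm
      have hc : c - (X.length : ℤ) + X.length = c := by ring
      rwa [hc] at h
    refine ⟨ω₂, ?_, hmatch.symm⟩
    refine Legal.infix ?_ (show Legal S (wordAt ω₂ (c - X.length) (X ++ v ++ Y).length)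
      from by rw [hωtot]; exact hleg)
    apply wordAt_infix
    · push_cast; omega
    · have hlen : (X ++ v ++ Y).length = X.length + v.length + Y.length := by
        simp only [List.length_append]
      rw [hlen]
      push_cast
      omega
  have hclosed : ∀ n, IsClosed (G n) := by
    intro n
    have hGn : G n = (⋃ w ∈ {w : List A | w.length = v.length + 2 * n ∧ Legal S w},
        {ω : ℤ → A | wordAt ω (c - n) (v.length + 2 * n) = w})
        ∩ {ω : ℤ → A | wordAt ω c v.length = v} := by
      ext ω
      simp only [hGdef, Set.mem_setOf_eq, Set.mem_inter_iff, Set.mem_iUnion]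
      constructor
      · rintro ⟨h1, h2⟩
        exact ⟨⟨wordAt ω (c - n) (v.length + 2 * n), ⟨by simp, h1⟩, rfl⟩, h2⟩
      · rintro ⟨⟨w, ⟨hwlen, hwleg⟩, hww⟩, h2⟩
        exact ⟨by rw [hww]; exact hwleg, h2⟩
    rw [hGn]
    refine IsClosed.inter ?_ isClosed_wordAt_eq
    apply Set.Finite.isClosed_biUnion
    · exact Set.Finite.subset (List.finite_length_eq A (v.length + 2 * n))
        (fun w hw => hw.1)
    · intro w _
      exact isClosed_wordAt_eq
  obtain ⟨ω', hω'⟩ := IsCompact.nonempty_iInter_of_sequence_nonempty_isCompact_isClosed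
    G hsub hne ((hclosed 0).isCompact) hclosed
  have hω'mem : ∀ n, ω' ∈ G n := by
    intro n
    exact Set.mem_iInter.mp hω' n
  refine ⟨ω', ?_, ((hω'mem 0).2).symm⟩
  intro u hu
  obtain ⟨hune, huo⟩ := hu
  obtain ⟨k, hk⟩ := occurs_iff.mp huo
  set n : ℕ := (max (c - k) (k + u.length - c - v.length)).toNat with hn
  have hn1 : c - k ≤ (n : ℤ) := le_trans (le_max_left _ _) (Int.self_le_toNat _)
  have hn2 : k + u.length - c - v.length ≤ (n : ℤ) :=
    le_trans (le_max_right _ _) (Int.self_le_toNat _)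
  have hleg := (hω'mem n).1
  refine Legal.infix ?_ hleg
  rw [hk]
  apply wordAt_infix
  · omega
  · push_cast; omega

theorem wordAt_eq_imp_pointwise {ω₁ ω₂ : ℤ → A} {a b : ℤ} {N : ℕ}
    (h : wordAt ω₁ a N = wordAt ω₂ b N) (i : ℕ) (hi : i < N) :
    ω₁ (a + i) = ω₂ (b + i) := by
  have h1 := wordAt_getElem ω₁ a N i hi
  have h2 := wordAt_getElem ω₂ b N i hi
  rw [← h1, ← h2]
  exact List.getElem_of_eq h (by simpa using hi)

theorem wordAt_two (ω : ℤ → A) (k : ℤ) : wordAt ω k 2 = [ω k, ω (k + 1)] := by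
  rw [show (2 : ℕ) = 1 + 1 from rfl, wordAt_add, wordAt_one, wordAt_one]
  norm_num

end Aux

/-- dichotomy: either the iterated hulls converge to `Ω(S)`, or their
distance to `Ω(S)` is bounded away from `0` (exactly one of the two holds). -/
theorem stmt16 {A : Type*} [Fintype A] [Nonempty A] (S : A → List A) (hS : ∀ a, S a ≠ [])
    (hprim : Primitive S) (hexp : ∃ a, 2 ≤ (S a).length) (ω₀ : ℤ → A) :
    Xor' (Filter.Tendsto (fun n : ℕ => hausDist (IHS S ω₀ n) (OmegaS S))
        Filter.atTop (nhds 0))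
      (∃ ε : ℝ, 0 < ε ∧ ∀ n : ℕ, ε ≤ hausDist (IHS S ω₀ n) (OmegaS S)) := by
  classical
  obtain ⟨p, hp1, hp⟩ := hprim
  obtain ⟨a₀, ha₀⟩ := hexp
  obtain ⟨ωS, hωS, -⟩ := exists_omegaS_matching hS hp ha₀
    (legal_singleton S (Classical.arbitrary A)) 0
  have hOmega_ne : (OmegaS S).Nonempty := ⟨ωS, hωS⟩
  have hIHS_ne : ∀ n, (IHS S ω₀ n).Nonempty := fun n => ⟨_, mem_hull_self _⟩
  have hexcl : Filter.Tendsto (fun n : ℕ => hausDist (IHS S ω₀ n) (OmegaS S))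
      Filter.atTop (nhds 0) →
      ¬ (∃ ε : ℝ, 0 < ε ∧ ∀ n : ℕ, ε ≤ hausDist (IHS S ω₀ n) (OmegaS S)) := by
    rintro ht ⟨ε, hε, hb⟩
    obtain ⟨N, hN⟩ := Metric.tendsto_atTop.mp ht ε hε
    have h1 := hN N (le_refl N)
    have h2 := hb N
    rw [Real.dist_eq, sub_zero, abs_of_nonneg (hausDist_nonneg (hIHS_ne N))] at h1
    linarith
  by_cases hbad : ∀ n : ℕ, ∃ u : List A, u.length = 2
      ∧ Occurs u ((confSub S)^[n] ω₀) ∧ ¬ Legal S u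
  · -- bad case: distance bounded below by 1/2
    have hbound : ∀ n : ℕ, (1 : ℝ) / 2 ≤ hausDist (IHS S ω₀ n) (OmegaS S) := by
      intro n
      obtain ⟨u, hu2, huo, hunl⟩ := hbad n
      obtain ⟨k, hk⟩ := occurs_iff.mp huo
      rw [hu2] at hk
      have hηmem : shift (-k) ((confSub S)^[n] ω₀) ∈ IHS S ω₀ n := shift_mem_hull _ _
      have hηword : wordAt (shift (-k) ((confSub S)^[n] ω₀)) 0 2 = u := by
        rw [wordAt_shift, show (0 : ℤ) - (-k) = k from by ring, ← hk]
      have hlow : (1 : ℝ) / 2 ≤ distToSet (shift (-k) ((confSub S)^[n] ω₀)) (OmegaS S) := by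
        apply le_distToSet hOmega_ne
        intro ω' hω'
        apply le_confDist
        intro r hr
        rcases le_or_gt r 1 with hr1 | hr2
        · have hrr : (r : ℝ) + 1 ≤ 2 := by
            have : (r : ℝ) ≤ 1 := by exact_mod_cast hr1
            linarith
          calc (1 : ℝ) / 2 ≤ 1 / ((r : ℝ) + 1) :=
                one_div_le_one_div_of_le (by positivity) hrr
            _ = 1 / ((r : ℕ) + 1) := by norm_num
        · exfalso
          apply hunl
          have h0 : ω' 0 = shift (-k) ((confSub S)^[n] ω₀) 0 :=
            (hr 0 (by rw [abs_zero]; omega)).symm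
          have h1 : ω' 1 = shift (-k) ((confSub S)^[n] ω₀) 1 :=
            (hr 1 (by rw [abs_one]; omega)).symm
          have hword : wordAt ω' 0 2 = u := by
            have h1' : ω' (0 + 1) = shift (-k) ((confSub S)^[n] ω₀) (0 + 1) := by
              norm_num [h1]
            rw [← hηword, wordAt_two, wordAt_two, h0, h1']
          have hune : u ≠ [] := by
            intro hnil; rw [hnil] at hu2; simp at hu2
          exact hω' u ⟨hune, hword ▸ occurs_wordAt ω' 0 2⟩
      exact le_trans hlow (le_hausDist_left hηmem)
    right
    refine ⟨⟨1 / 2, by norm_num, hbound⟩, fun ht => hexcl ht ⟨1 / 2, by norm_num, hbound⟩⟩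
  · -- good case
    push_neg at hbad
    obtain ⟨N, hN⟩ := hbad
    have h2leg : ∀ s : ℕ, ∀ u : List A, u.length = 2 →
        Occurs u ((confSub S)^[N + s] ω₀) → Legal S u := by
      intro s
      induction s with
      | zero => simpa using hN
      | succ s ih =>
          intro u hu2 huo
          have hco : (confSub S)^[N + (s + 1)] ω₀
              = (confSub S)^[1] ((confSub S)^[N + s] ω₀) := by
            rw [show N + (s + 1) = 1 + (N + s) from by ring, Function.iterate_add_apply]
          rw [hco] at huo
          obtain ⟨w, hwo, hw2, hwinf⟩ := lemB hS (minLenGe_one hS 1) (le_refl 1) huo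
            (by omega)
          exact Legal.infix hwinf (legal_iterWordSub (ih w hw2 hwo) 1)
    have hLleg : ∀ L : ℕ, ∃ N' : ℕ, ∀ n, N' ≤ n → ∀ v : List A, v ≠ [] →
        v.length ≤ L + 1 → Occurs v ((confSub S)^[n] ω₀) → Legal S v := by
      intro L
      obtain ⟨m₀, hm₀⟩ := exists_minLenGe hS hp ha₀ L
      refine ⟨N + m₀, fun n hn v hvne hvlen hvo => ?_⟩
      have hnm : n = (n - N) + N := by omega
      have hmm : m₀ ≤ n - N := by omega
      rw [hnm, Function.iterate_add_apply] at hvo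
      obtain ⟨w, hwo, hw2, hwinf⟩ := lemB hS (hm₀ (n - N) hmm) (by omega) hvo (by omega)
      have hwleg : Legal S w := by
        apply h2leg 0 w hw2
        rw [Nat.add_zero]
        exact hwo
      exact Legal.infix hwinf (legal_iterWordSub hwleg (n - N))
    have hocc : ∀ (v : List A) (a : A) (mv : ℕ), v <:+: (wordSub S)^[mv] [a] →
        ∀ n : ℕ, mv + p ≤ n → Occurs v ((confSub S)^[n] ω₀) := by
      intro v a mv hva n hnv
      have hmem : a ∈ (wordSub S)^[n - mv] [ω₀ 0] :=
        mem_iter_of_ge hS hp (by omega) (ω₀ 0) a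
      obtain ⟨x, y, hxy⟩ := List.append_of_mem hmem
      have hainf : [a] <:+: (wordSub S)^[n - mv] [ω₀ 0] :=
        ⟨x, y, by rw [hxy]; simp⟩
      have hWinf : (wordSub S)^[mv] [a] <:+: (wordSub S)^[n] [ω₀ 0] := by
        have h := infix_iterWordSub S mv hainf
        rwa [← Function.iterate_add_apply, show mv + (n - mv) = n from by omega] at h
      have hbocc : Occurs ((wordSub S)^[n] [ω₀ 0]) ((confSub S)^[n] ω₀) := by
        apply occurs_iterConfSub hS _ n
        exact occurs_iff.mpr ⟨0, by rw [show ([ω₀ 0] : List A).length = 1 from rfl,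
          wordAt_one]⟩
      exact Occurs.infix (hva.trans hWinf) hbocc
    have hocc_unif : ∀ R : ℕ, ∃ Nr : ℕ, ∀ v : List A, v.length = R → Legal S v →
        ∀ n : ℕ, Nr ≤ n → Occurs v ((confSub S)^[n] ω₀) := by
      intro R
      have hT : {v : List A | v.length = R ∧ Legal S v}.Finite :=
        (List.finite_length_eq A R).subset (fun v hv => hv.1)
      set g : List A → ℕ := fun v => if h : Legal S v then h.choose_spec.choose else 0
        with hg
      refine ⟨hT.toFinset.sup g + p, fun v hvR hvleg n hn => ?_⟩
      have hgv : v <:+: (wordSub S)^[g v] [hvleg.choose] := by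
        rw [hg]
        simp only [dif_pos hvleg]
        exact hvleg.choose_spec.choose_spec
      have hvmem : v ∈ hT.toFinset := hT.mem_toFinset.mpr ⟨hvR, hvleg⟩
      have hsup : g v ≤ hT.toFinset.sup g := Finset.le_sup hvmem
      exact hocc v hvleg.choose (g v) hgv n (by omega)
    have htend : Filter.Tendsto (fun n : ℕ => hausDist (IHS S ω₀ n) (OmegaS S))
        Filter.atTop (nhds 0) := by
      rw [Metric.tendsto_atTop]
      intro ε hε
      obtain ⟨r, hr⟩ := exists_nat_one_div_lt hε
      obtain ⟨N₁, hN₁⟩ := hLleg (2 * r + 1)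
      obtain ⟨N₂, hN₂⟩ := hocc_unif (2 * r + 1)
      refine ⟨max N₁ N₂, fun n hn => ?_⟩
      have hnn : 0 ≤ hausDist (IHS S ω₀ n) (OmegaS S) := hausDist_nonneg (hIHS_ne n)
      rw [Real.dist_eq, sub_zero, abs_of_nonneg hnn]
      have hle : hausDist (IHS S ω₀ n) (OmegaS S) ≤ 1 / ((r : ℝ) + 1) := by
        apply hausDist_le (by positivity)
        · -- every point of the iterated hull is close to Ω(S)
          intro η hη
          have hvo : Occurs (wordAt η (-(r : ℤ)) (2 * r + 1)) ((confSub S)^[n] ω₀) :=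
            occurs_of_mem_hull hη _ _
          have hvne : wordAt η (-(r : ℤ)) (2 * r + 1) ≠ [] := by
            intro hnil
            have := wordAt_length η (-(r : ℤ)) (2 * r + 1)
            rw [hnil] at this
            simp at this
          have hvleg : Legal S (wordAt η (-(r : ℤ)) (2 * r + 1)) :=
            hN₁ n (le_trans (le_max_left _ _) hn) _ hvne (by rw [wordAt_length]; omega) hvo
          obtain ⟨ω', hω', hmatch⟩ := exists_omegaS_matching hS hp ha₀ hvleg (-(r : ℤ))
          rw [wordAt_length] at hmatch
          refine le_trans (distToSet_le_of_mem hω') (confDist_le ?_)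
          intro k hk
          have hk' := abs_lt.mp hk
          obtain ⟨hk1, hk2⟩ := hk'
          have hik : k = -(r : ℤ) + ((k + r).toNat : ℕ) := by omega
          have hiR : (k + r).toNat < 2 * r + 1 := by omega
          rw [hik]
          exact wordAt_eq_imp_pointwise hmatch _ hiR
        · -- every point of Ω(S) is close to the iterated hull
          intro ω hω
          have hvne : wordAt ω (-(r : ℤ)) (2 * r + 1) ≠ [] := by
            intro hnil
            have := wordAt_length ω (-(r : ℤ)) (2 * r + 1)
            rw [hnil] at this
            simp at this
          have hvleg : Legal S (wordAt ω (-(r : ℤ)) (2 * r + 1)) :=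
            hω _ ⟨hvne, occurs_wordAt ω _ _⟩
          have hvocc := hN₂ _ (wordAt_length ω (-(r : ℤ)) (2 * r + 1)) hvleg n
            (le_trans (le_max_right _ _) hn)
          obtain ⟨k, hk⟩ := occurs_iff.mp hvocc
          rw [wordAt_length] at hk
          have hshift : shift (-(r : ℤ) - k) ((confSub S)^[n] ω₀) ∈ IHS S ω₀ n :=
            shift_mem_hull _ _
          refine le_trans (distToSet_le_of_mem hshift) (confDist_le ?_)
          intro j hj
          have hj' := abs_lt.mp hj
          obtain ⟨hj1, hj2⟩ := hj'
          have heq : wordAt ω (-(r : ℤ)) (2 * r + 1)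
              = wordAt (shift (-(r : ℤ) - k) ((confSub S)^[n] ω₀)) (-(r : ℤ))
                (2 * r + 1) := by
            rw [wordAt_shift, show -(r : ℤ) - (-(r : ℤ) - k) = k from by ring]
            exact hk
          have hij : j = -(r : ℤ) + ((j + r).toNat : ℕ) := by omega
          have hiR : (j + r).toNat < 2 * r + 1 := by omega
          rw [hij]
          exact wordAt_eq_imp_pointwise heq _ hiR
      exact lt_of_le_of_lt (le_trans hle (by norm_num)) hr
    left
    exact ⟨htend, hexcl htend⟩

end QC
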